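/- arXiv:math/0007183 — 5 statements merged into one kernel-verified Lean document; each statement's English description precedes it below -/
import Mathlib

section
/- Let H be a Hilbert space, Δ ∈ L(H) selfadjoint with 0 ≤ Δ ≤ I, and let T = [[I, -Δ],[0, I]] acting on H ⊕ H. Suppose there exists C > 0 such that T* [[I, -Δ],[-Δ, I]] T ≤ C² [[I, -Δ],[-Δ, I]]. Then I ≤ C²(I - Δ²). Consequently, if 1 is in the spectrum of Δ, no such C exists. -/
noncomputable section

open scoped InnerProductSpace

private lemma scalar_key_aux (c n u w : ℝ) (hn : 0 ≤ n) (hu : 0 ≤ u) (hw : 0 ≤ w)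
    (hcs : u * u ≤ n * w) (h0 : 0 ≤ (c - 1) * n)
    (hd : (c - 2) ^ 2 * (u * u) ≤ ((c - 1) * u - 3 * w) * ((c - 1) * n)) :
    c * u ≤ (c - 1) * n := by
  rcases eq_or_lt_of_le hn with h | hnpos
  · have hu0 : u = 0 := by nlinarith
    simp [hu0, ← h]
  have hD : 0 ≤ c - 1 := (mul_nonneg_iff_of_pos_right hnpos).mp h0
  rcases eq_or_lt_of_le hu with h | hupos
  · nlinarith
  rcases eq_or_lt_of_le hD with h | hDpos
  · nlinarith
  · nlinarith [mul_le_mul_of_nonneg_left hcs hD, mul_pos hDpos hupos]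

/-- The 2×2 block operator `[[a, b], [c, d]]` acting on the Hilbert space direct
sum `H ⊕ H` (modelled as `WithLp 2 (H × H)`). -/
def blk {H : Type*} [NormedAddCommGroup H] [InnerProductSpace ℂ H] [CompleteSpace H]
    (a b c d : H →L[ℂ] H) : WithLp 2 (H × H) →L[ℂ] WithLp 2 (H × H) :=
  ((WithLp.prodContinuousLinearEquiv 2 ℂ H H).symm.toContinuousLinearMap).comp
    ((((a.comp (ContinuousLinearMap.fst ℂ H H)) + (b.comp (ContinuousLinearMap.snd ℂ H H))).prod
      ((c.comp (ContinuousLinearMap.fst ℂ H H)) + (d.comp (ContinuousLinearMap.snd ℂ H H)))).comp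
      (WithLp.prodContinuousLinearEquiv 2 ℂ H H).toContinuousLinearMap)

/-- If `T = [[I, -Δ],[0, I]]` satisfies `T* M T ≤ C² M` for `M = [[I, -Δ],[-Δ, I]]`,
then `I ≤ C²(I - Δ²)`; consequently `1` cannot belong to the spectrum of `Δ`. -/
theorem block_inequality_consequence {H : Type*} [NormedAddCommGroup H]
    [InnerProductSpace ℂ H] [CompleteSpace H] (Δ : H →L[ℂ] H)
    (hsa : IsSelfAdjoint Δ) (h0 : 0 ≤ Δ) (h1 : Δ ≤ 1) (C : ℝ) (hC : 0 < C)
    (hineq : (ContinuousLinearMap.adjoint (blk 1 (-Δ) 0 1)) ∘L (blk 1 (-Δ) (-Δ) 1) ∘L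
        (blk 1 (-Δ) 0 1) ≤ ((C : ℂ) ^ 2) • blk 1 (-Δ) (-Δ) 1) :
    (1 : H →L[ℂ] H) ≤ ((C : ℂ) ^ 2) • (1 - Δ * Δ) ∧ (1 : ℝ) ∉ spectrum ℝ Δ := by
  have hsym : ∀ a b : H, ⟪Δ a, b⟫_ℂ = ⟪a, Δ b⟫_ℂ := fun a b => by
    nth_rewrite 1 [← hsa]
    rw [ContinuousLinearMap.star_eq_adjoint]
    exact ContinuousLinearMap.adjoint_inner_left Δ b a
  -- the quadratic inequality obtained by testing on `(x, s • Δ x)`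
  have hquad : ∀ (x : H) (s : ℝ),
      0 ≤ ((C^2-1) * ‖Δ x‖^2 - 3 * ‖Δ (Δ x)‖^2) * (s * s)
        + ((4 - 2*C^2) * ‖Δ x‖^2) * s + (C^2-1) * ‖x‖^2 := by
    intro x s
    have hP := (ContinuousLinearMap.le_def _ _).mp hineq
    set v : WithLp 2 (H × H) := (WithLp.equiv 2 (H × H)).symm (x, (s:ℂ) • Δ x) with hv
    have h := hP.inner_nonneg_left v
    have hexp : ⟪(((C : ℂ) ^ 2) • blk 1 (-Δ) (-Δ) 1 -
        (ContinuousLinearMap.adjoint (blk 1 (-Δ) 0 1)) ∘L (blk 1 (-Δ) (-Δ) 1) ∘L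
          (blk 1 (-Δ) 0 1)) v, v⟫_ℂ
        = (((C:ℂ)^2-1) * ⟪Δ x, Δ x⟫_ℂ - 3 * ⟪Δ (Δ x), Δ (Δ x)⟫_ℂ) * (s * s)
        + ((4 - 2*(C:ℂ)^2) * ⟪Δ x, Δ x⟫_ℂ) * s + ((C:ℂ)^2-1) * ⟪x, x⟫_ℂ := by
      have e1 : ⟪Δ (Δ x), x⟫_ℂ = ⟪Δ x, Δ x⟫_ℂ := hsym (Δ x) x
      have e2 : ⟪x, Δ (Δ x)⟫_ℂ = ⟪Δ x, Δ x⟫_ℂ := by rw [← hsym]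
      have e3 : ⟪Δ (Δ (Δ x)), Δ x⟫_ℂ = ⟪Δ (Δ x), Δ (Δ x)⟫_ℂ := hsym (Δ (Δ x)) (Δ x)
      have e4 : ⟪Δ x, Δ (Δ (Δ x))⟫_ℂ = ⟪Δ (Δ x), Δ (Δ x)⟫_ℂ := by rw [← hsym]
      simp only [ContinuousLinearMap.sub_apply, ContinuousLinearMap.smul_apply,
        ContinuousLinearMap.comp_apply, ContinuousLinearMap.adjoint_inner_left,
        inner_sub_left, inner_smul_left, inner_smul_right]
      simp only [hv, blk, ContinuousLinearMap.comp_apply, ContinuousLinearMap.coe_comp',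
        Function.comp_apply, ContinuousLinearEquiv.coe_coe,
        WithLp.prodContinuousLinearEquiv_apply, WithLp.prodContinuousLinearEquiv_symm_apply,
        ContinuousLinearMap.prod_apply, ContinuousLinearMap.add_apply,
        ContinuousLinearMap.coe_fst', ContinuousLinearMap.coe_snd',
        ContinuousLinearMap.one_apply, ContinuousLinearMap.neg_apply,
        ContinuousLinearMap.zero_apply,
        WithLp.equiv_symm_apply, WithLp.ofLp_toLp, Equiv.apply_symm_apply, zero_add,
        WithLp.prod_inner_apply,
        map_smul, map_add, map_neg, inner_add_left, inner_add_right, inner_neg_left,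
        inner_neg_right, inner_smul_left, inner_smul_right, inner_zero_left, inner_zero_right,
        e1, e2, e3, e4, Complex.conj_ofReal, map_pow, map_sub, map_one, map_ofNat]
      ring
    rw [hexp] at h
    have nx : (⟪x, x⟫_ℂ).re = ‖x‖^2 := inner_self_eq_norm_sq (𝕜 := ℂ) x
    have ny : (⟪Δ x, Δ x⟫_ℂ).re = ‖Δ x‖^2 := inner_self_eq_norm_sq (𝕜 := ℂ) (Δ x)
    have nz : (⟪Δ (Δ x), Δ (Δ x)⟫_ℂ).re = ‖Δ (Δ x)‖^2 := inner_self_eq_norm_sq (𝕜 := ℂ) (Δ (Δ x))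
    simp [← Complex.ofReal_pow, nx, ny, nz] at h
    exact_mod_cast h
  -- the key scalar inequality
  have hkey : ∀ x : H, C^2 * ‖Δ x‖^2 ≤ (C^2 - 1) * ‖x‖^2 := by
    intro x
    have hd := discrim_le_zero (hquad x)
    rw [discrim] at hd
    have hcs : ‖Δ x‖^2 * ‖Δ x‖^2 ≤ ‖x‖^2 * ‖Δ (Δ x)‖^2 := by
      have h1 : ‖Δ x‖^2 = RCLike.re ⟪Δ (Δ x), x⟫_ℂ := by
        rw [hsym]; exact (inner_self_eq_norm_sq (𝕜 := ℂ) (Δ x)).symm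
      have h2 : RCLike.re ⟪Δ (Δ x), x⟫_ℂ ≤ ‖Δ (Δ x)‖ * ‖x‖ := re_inner_le_norm _ _
      have h3 : ‖Δ x‖^2 ≤ ‖Δ (Δ x)‖ * ‖x‖ := h1 ▸ h2
      have h4 := mul_self_le_mul_self (sq_nonneg ‖Δ x‖) h3
      nlinarith [h4]
    have h00 : 0 ≤ (C^2 - 1) * ‖x‖^2 := by simpa using hquad x 0
    have hd' : (C^2 - 2) ^ 2 * (‖Δ x‖^2 * ‖Δ x‖^2)
        ≤ ((C^2 - 1) * ‖Δ x‖^2 - 3 * ‖Δ (Δ x)‖^2) * ((C^2 - 1) * ‖x‖^2) := by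
      nlinarith [hd]
    exact scalar_key_aux (C^2) (‖x‖^2) (‖Δ x‖^2) (‖Δ (Δ x)‖^2) (sq_nonneg _) (sq_nonneg _)
      (sq_nonneg _) hcs h00 hd'
  have part1 : (1 : H →L[ℂ] H) ≤ ((C : ℂ) ^ 2) • (1 - Δ * Δ) := by
    rw [ContinuousLinearMap.le_def]
    refine ⟨?_, fun x => ?_⟩
    · have hΔΔ : IsSelfAdjoint (Δ * Δ) := by simpa [sq] using hsa.pow 2
      have hsub : IsSelfAdjoint ((1 : H →L[ℂ] H) - Δ * Δ) :=
        (IsSelfAdjoint.one _).sub hΔΔ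
      have hC2sa : IsSelfAdjoint ((C : ℂ) ^ 2) := by
        simp [IsSelfAdjoint, ← Complex.ofReal_pow]
      exact ((hC2sa.smul hsub).sub (IsSelfAdjoint.one _)).isSymmetric
    · rw [ContinuousLinearMap.reApplyInnerSelf_apply]
      have e1 : ⟪Δ (Δ x), x⟫_ℂ = ⟪Δ x, Δ x⟫_ℂ := hsym (Δ x) x
      have hval : RCLike.re ⟪((((C : ℂ) ^ 2) • ((1 : H →L[ℂ] H) - Δ * Δ)) - 1) x, x⟫_ℂ
          = C^2 * (‖x‖^2 - ‖Δ x‖^2) - ‖x‖^2 := by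
        have nx : (⟪x, x⟫_ℂ).re = ‖x‖^2 := inner_self_eq_norm_sq (𝕜 := ℂ) x
        have ny : (⟪Δ x, Δ x⟫_ℂ).re = ‖Δ x‖^2 := inner_self_eq_norm_sq (𝕜 := ℂ) (Δ x)
        simp only [ContinuousLinearMap.sub_apply, ContinuousLinearMap.smul_apply,
          ContinuousLinearMap.one_apply, ContinuousLinearMap.mul_apply,
          inner_sub_left, inner_smul_left, e1, Complex.conj_ofReal, map_pow]
        simp [← Complex.ofReal_pow, nx, ny]
      rw [hval]
      have := hkey x
      nlinarith [this]
  refine ⟨part1, ?_⟩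
  -- invertibility of `1 - Δ * Δ`
  have hunit : IsUnit ((1 : H →L[ℂ] H) - Δ * Δ) := by
    refine ContinuousLinearMap.isUnit_of_forall_le_norm_inner_map _
      (c := ⟨(C^2)⁻¹, by positivity⟩) (
        NNReal.coe_pos.mp (show (0:ℝ) < (C^2)⁻¹ by positivity)) (fun x => ?_)
    have e1 : ⟪Δ (Δ x), x⟫_ℂ = ⟪Δ x, Δ x⟫_ℂ := hsym (Δ x) x
    have hre : RCLike.re ⟪((1 : H →L[ℂ] H) - Δ * Δ) x, x⟫_ℂ = ‖x‖^2 - ‖Δ x‖^2 := by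
      have nx : (⟪x, x⟫_ℂ).re = ‖x‖^2 := inner_self_eq_norm_sq (𝕜 := ℂ) x
      have ny : (⟪Δ x, Δ x⟫_ℂ).re = ‖Δ x‖^2 := inner_self_eq_norm_sq (𝕜 := ℂ) (Δ x)
      simp only [ContinuousLinearMap.sub_apply, ContinuousLinearMap.one_apply,
        ContinuousLinearMap.mul_apply, inner_sub_left, e1]
      simp [nx, ny, ← Complex.ofReal_pow]
    have hC2 : (0:ℝ) < C^2 := by positivity
    have hk := hkey x
    have hstep : ‖x‖^2 * (C^2)⁻¹ ≤ ‖x‖^2 - ‖Δ x‖^2 := by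
      rw [mul_inv_le_iff₀ hC2]
      nlinarith [hk]
    calc ‖x‖^2 * ((⟨(C^2)⁻¹, by positivity⟩ : NNReal) : ℝ) = ‖x‖^2 * (C^2)⁻¹ := rfl
      _ ≤ ‖x‖^2 - ‖Δ x‖^2 := hstep
      _ = RCLike.re ⟪((1 : H →L[ℂ] H) - Δ * Δ) x, x⟫_ℂ := hre.symm
      _ ≤ ‖⟪((1 : H →L[ℂ] H) - Δ * Δ) x, x⟫_ℂ‖ := RCLike.re_le_norm _
  -- hence `1 - Δ` is a unit
  obtain ⟨U, hU⟩ := hunit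
  have hcomm : Commute ((1 : H →L[ℂ] H) - Δ) (U : H →L[ℂ] H) := by
    rw [hU]
    show ((1 : H →L[ℂ] H) - Δ) * (1 - Δ * Δ) = (1 - Δ * Δ) * (1 - Δ)
    noncomm_ring
  have hcinv : Commute ((1 : H →L[ℂ] H) - Δ) ((U⁻¹ : (H →L[ℂ] H)ˣ) : H →L[ℂ] H) :=
    hcomm.units_inv_right
  have hΔunit : IsUnit ((1 : H →L[ℂ] H) - Δ) := by
    refine isUnit_iff_exists.mpr ⟨(1 + Δ) * ((U⁻¹ : (H →L[ℂ] H)ˣ) : H →L[ℂ] H), ?_, ?_⟩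
    · have : ((1 : H →L[ℂ] H) - Δ) * (1 + Δ) = (U : H →L[ℂ] H) := by
        rw [hU]; noncomm_ring
      rw [← mul_assoc, this]
      exact U.mul_inv
    · have h5 : ((1 : H →L[ℂ] H) + Δ) * ((1 : H →L[ℂ] H) - Δ) = (U : H →L[ℂ] H) := by
        rw [hU]; noncomm_ring
      calc ((1 : H →L[ℂ] H) + Δ) * ((U⁻¹ : (H →L[ℂ] H)ˣ) : H →L[ℂ] H) * (1 - Δ)
          = (1 + Δ) * (((U⁻¹ : (H →L[ℂ] H)ˣ) : H →L[ℂ] H) * (1 - Δ)) := by rw [mul_assoc]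
        _ = (1 + Δ) * ((1 - Δ) * ((U⁻¹ : (H →L[ℂ] H)ˣ) : H →L[ℂ] H)) := by rw [← hcinv.eq]
        _ = ((1 + Δ) * (1 - Δ)) * ((U⁻¹ : (H →L[ℂ] H)ˣ) : H →L[ℂ] H) := by rw [mul_assoc]
        _ = (U : H →L[ℂ] H) * ((U⁻¹ : (H →L[ℂ] H)ˣ) : H →L[ℂ] H) := by rw [h5]
        _ = 1 := U.mul_inv
  intro hmem
  exact (spectrum.notMem_iff.mpr (by simpa using hΔunit)) hmem

end
end

section
/- Let H₀ be an infinite-dimensional Hilbert space and A₀ a bounded selfadjoint operator on H₀ with 0 ≤ A₀ ≤ I, ker A₀ = 0, and 0 in the spectrum of A₀. On H = H₀ ⊕ H₀ with symmetry J = diag(I, -I), let A = diag(A₀, -A₀) and Π = [[I, -(I-A₀)^{1/2}],[(I-A₀)^{1/2}, -I]]. Then Π* J Π = A. -/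
noncomputable section

set_option linter.unusedSectionVars false
set_option linter.unusedVariables false

lemma blk_apply {H : Type*} [NormedAddCommGroup H] [InnerProductSpace ℂ H] [CompleteSpace H]
    (a b c d : H →L[ℂ] H) (x : WithLp 2 (H × H)) :
    blk a b c d x = (WithLp.equiv 2 (H × H)).symm
      (a x.fst + b x.snd, c x.fst + d x.snd) := rfl

lemma blk_comp {H : Type*} [NormedAddCommGroup H] [InnerProductSpace ℂ H] [CompleteSpace H]
    (a b c d a' b' c' d' : H →L[ℂ] H) :
    blk a b c d ∘L blk a' b' c' d' =
      blk (a ∘L a' + b ∘L c') (a ∘L b' + b ∘L d') (c ∘L a' + d ∘L c') (c ∘L b' + d ∘L d') := by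
  ext x
  simp [blk_apply, WithLp.toLp_fst, WithLp.toLp_snd, map_add]
  constructor <;> abel

lemma blk_adjoint {H : Type*} [NormedAddCommGroup H] [InnerProductSpace ℂ H] [CompleteSpace H]
    (a b c d : H →L[ℂ] H) :
    ContinuousLinearMap.adjoint (blk a b c d) =
      blk (ContinuousLinearMap.adjoint a) (ContinuousLinearMap.adjoint c)
        (ContinuousLinearMap.adjoint b) (ContinuousLinearMap.adjoint d) := by
  symm
  refine (ContinuousLinearMap.eq_adjoint_iff _ (blk a b c d)).mpr fun x y => ?_
  simp [blk_apply, WithLp.prod_inner_apply, inner_add_left, inner_add_right,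
    ContinuousLinearMap.adjoint_inner_left]
  ring

/-- With `A₀` selfadjoint, `0 ≤ A₀ ≤ I`, `ker A₀ = 0` and `0` in the spectrum of `A₀`,
and `R = (I - A₀)^{1/2}`, the block operator `Π = [[I, -R],[R, -I]]` on `H₀ ⊕ H₀`
satisfies `Π* J Π = A`, where `J = diag(I, -I)` and `A = diag(A₀, -A₀)`. -/
theorem pi_star_J_pi_eq_A {H₀ : Type*} [NormedAddCommGroup H₀]
    [InnerProductSpace ℂ H₀] [CompleteSpace H₀] (A₀ : H₀ →L[ℂ] H₀)
    (hsa : IsSelfAdjoint A₀) (h0 : 0 ≤ A₀) (h1 : A₀ ≤ 1)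
    (hker : ∀ x : H₀, A₀ x = 0 → x = 0) (hspec : (0 : ℝ) ∈ spectrum ℝ A₀) :
    (ContinuousLinearMap.adjoint
        (blk 1 (-(cfc (fun t : ℝ => Real.sqrt (1 - t)) A₀))
          (cfc (fun t : ℝ => Real.sqrt (1 - t)) A₀) (-1))) ∘L
      (blk 1 0 0 (-1)) ∘L
      (blk 1 (-(cfc (fun t : ℝ => Real.sqrt (1 - t)) A₀))
        (cfc (fun t : ℝ => Real.sqrt (1 - t)) A₀) (-1)) =
    blk A₀ 0 0 (-A₀) := by
  set R := cfc (fun t : ℝ => Real.sqrt (1 - t)) A₀ with hRdef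
  have hRsa : IsSelfAdjoint R := cfc_predicate _ A₀
  have hle : ∀ t ∈ spectrum ℝ A₀, t ≤ 1 := by
    intro t ht
    have hmem : (1 : ℝ) - t ∈ spectrum ℝ (1 - A₀) := by
      have h := spectrum.singleton_sub_eq A₀ (1 : ℝ)
      rw [map_one] at h
      rw [← h]
      exact Set.sub_mem_sub rfl ht
    have := spectrum_nonneg_of_nonneg (sub_nonneg.mpr h1) hmem
    linarith
  have hR2 : R * R = 1 - A₀ := by
    rw [hRdef, ← cfc_mul _ _ A₀]
    have h2 : cfc (fun t : ℝ => Real.sqrt (1 - t) * Real.sqrt (1 - t)) A₀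
        = cfc (fun t : ℝ => 1 - t) A₀ :=
      cfc_congr fun t ht => Real.mul_self_sqrt (by linarith [hle t ht])
    rw [h2, cfc_sub _ _ A₀, cfc_const_one ℝ A₀, cfc_id' ℝ A₀]
  rw [blk_adjoint, blk_comp, blk_comp]
  simp only [← ContinuousLinearMap.mul_def, ← ContinuousLinearMap.star_eq_adjoint,
    star_one, star_neg, hRsa.star_eq, one_mul, mul_one, zero_mul, mul_zero,
    add_zero, zero_add, neg_mul, mul_neg, neg_neg, neg_zero]
  congr 1 <;> first
    | (rw [hR2]; abel)
    | abel

end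
end

section
/- With H₀, A₀, H = H₀ ⊕ H₀, and Π = [[I, -(I-A₀)^{1/2}],[(I-A₀)^{1/2}, -I]] as above (0 ≤ A₀ ≤ I, ker A₀ = 0), the operator Π has dense range in H. -/
noncomputable section

lemma blk_apply_symm' {H : Type*} [NormedAddCommGroup H] [InnerProductSpace ℂ H] [CompleteSpace H]
    (a b c d : H →L[ℂ] H) (x y : H) :
    blk a b c d ((WithLp.prodContinuousLinearEquiv 2 ℂ H H).symm (x, y)) =
      (WithLp.prodContinuousLinearEquiv 2 ℂ H H).symm (a x + b y, c x + d y) := by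
  simp [blk]

lemma A_denseRange' {H₀ : Type*} [NormedAddCommGroup H₀]
    [InnerProductSpace ℂ H₀] [CompleteSpace H₀] (A₀ : H₀ →L[ℂ] H₀)
    (hsa : IsSelfAdjoint A₀) (hker : ∀ x : H₀, A₀ x = 0 → x = 0) :
    DenseRange ⇑A₀ := by
  have hdense : Dense ((LinearMap.range (A₀ : H₀ →ₗ[ℂ] H₀)) : Set H₀) := by
    rw [Submodule.dense_iff_topologicalClosure_eq_top,
      Submodule.topologicalClosure_eq_top_iff, Submodule.eq_bot_iff]
    intro z hz
    refine hker z ?_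
    have h3 : ∀ x : H₀, inner ℂ x (A₀ z) = (0 : ℂ) := fun x => by
      have := hz (A₀ x) ⟨x, rfl⟩
      rwa [← ContinuousLinearMap.adjoint_inner_right, hsa.adjoint_eq] at this
    have := h3 (A₀ z)
    rwa [inner_self_eq_zero] at this
  have : Set.range ⇑A₀ = ((LinearMap.range (A₀ : H₀ →ₗ[ℂ] H₀)) : Set H₀) := by
    ext x; simp [LinearMap.mem_range]
  rw [DenseRange, this]; exact hdense

lemma sqrt_mul_self' {H₀ : Type*} [NormedAddCommGroup H₀]
    [InnerProductSpace ℂ H₀] [CompleteSpace H₀] (A₀ : H₀ →L[ℂ] H₀)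
    (hsa : IsSelfAdjoint A₀) (h1 : A₀ ≤ 1) :
    (cfc (fun t : ℝ => Real.sqrt (1 - t)) A₀) * (cfc (fun t : ℝ => Real.sqrt (1 - t)) A₀)
      = 1 - A₀ := by
  rw [← cfc_mul _ _ A₀]
  have h1' := (CFC.le_one_iff (R := ℝ) A₀).mp h1
  calc cfc (fun t : ℝ => Real.sqrt (1-t) * Real.sqrt (1-t)) A₀
      = cfc (fun t : ℝ => 1 - t) A₀ := by
        apply cfc_congr
        intro t ht
        exact Real.mul_self_sqrt (by linarith [h1' t ht])
    _ = 1 - A₀ := by rw [cfc_sub _ _ A₀, cfc_const_one ℝ A₀, cfc_id' ℝ A₀]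

/-- With `A₀` selfadjoint, `0 ≤ A₀ ≤ I` and `ker A₀ = 0`, and `R = (I - A₀)^{1/2}`,
the block operator `Π = [[I, -R],[R, -I]]` has dense range in `H₀ ⊕ H₀`. -/
theorem pi_denseRange {H₀ : Type*} [NormedAddCommGroup H₀]
    [InnerProductSpace ℂ H₀] [CompleteSpace H₀] (A₀ : H₀ →L[ℂ] H₀)
    (hsa : IsSelfAdjoint A₀) (h0 : 0 ≤ A₀) (h1 : A₀ ≤ 1)
    (hker : ∀ x : H₀, A₀ x = 0 → x = 0) :
    DenseRange ⇑(blk 1 (-(cfc (fun t : ℝ => Real.sqrt (1 - t)) A₀))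
      (cfc (fun t : ℝ => Real.sqrt (1 - t)) A₀) (-1)) := by
  set R := cfc (fun t : ℝ => Real.sqrt (1 - t)) A₀ with hR
  set e := WithLp.prodContinuousLinearEquiv 2 ℂ H₀ H₀ with he
  intro p
  set u := (e p).1 with hu
  set v := (e p).2 with hv
  have hA := A_denseRange' A₀ hsa hker
  have hclose : (R u - v) ∈ closure (Set.range ⇑A₀) := hA _
  rw [mem_closure_iff_seq_limit] at hclose
  obtain ⟨s, hs, hlim⟩ := hclose
  choose y hy using hs
  have hRR : ∀ z : H₀, R (R z) = z - A₀ z := by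
    intro z
    have := sqrt_mul_self' A₀ hsa h1
    rw [← hR] at this
    calc R (R z) = (R * R) z := rfl
      _ = (1 - A₀) z := by rw [this]
      _ = z - A₀ z := by simp
  have hcomp : ∀ n, blk 1 (-R) R (-1) (e.symm (u + R (y n), y n))
      = e.symm (u, R u - A₀ (y n)) := by
    intro n
    rw [blk_apply_symm']
    congr 1
    refine Prod.ext ?_ ?_
    · simp
    · simp only [ContinuousLinearMap.add_apply, ContinuousLinearMap.neg_apply,
        ContinuousLinearMap.one_apply, map_add]
      rw [hRR]
      abel
  have hlim2 : Filter.Tendsto (fun n => A₀ (y n)) Filter.atTop (nhds (R u - v)) := by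
    have : (fun n => A₀ (y n)) = s := funext hy
    rw [this]; exact hlim
  have hlim3 : Filter.Tendsto (fun n => ((u, R u - A₀ (y n)) : H₀ × H₀))
      Filter.atTop (nhds (u, v)) := by
    have : Filter.Tendsto (fun n => R u - A₀ (y n)) Filter.atTop (nhds v) := by
      have := Filter.Tendsto.sub (tendsto_const_nhds (x := R u)) hlim2
      simpa using this
    exact Filter.Tendsto.prodMk_nhds tendsto_const_nhds this
  have hp : e.symm (u, v) = p := by
    rw [hu, hv]
    rw [Prod.mk.eta]
    exact e.symm_apply_apply p
  have htt : Filter.Tendsto (fun n => blk 1 (-R) R (-1) (e.symm (u + R (y n), y n)))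
      Filter.atTop (nhds p) := by
    have heq : (fun n => blk 1 (-R) R (-1) (e.symm (u + R (y n), y n)))
        = fun n => e.symm (u, R u - A₀ (y n)) := funext hcomp
    rw [heq, ← hp]
    exact (e.symm.continuous.tendsto (u, v)).comp hlim3
  exact mem_closure_of_tendsto htt
    (Filter.Eventually.of_forall fun n => Set.mem_range_self _)

end
end

section
/- Let S be a unital semigroup acting on a set X via φ, and let α : S × X → ℂ∗ satisfy α(ab,x)·conj(α(ab,y)) = α(a,φ(b,x))·conj(α(a,φ(b,y)))·α(b,x)·conj(α(b,y)) for all a,b ∈ S and x,y ∈ X. Then σ(a,b) := α(a,φ(b,x))⁻¹ α(b,x)⁻¹ α(ab,x) is independent of x ∈ X, satisfies |σ(a,b)| = 1, and satisfies the 2-cocycle identity σ(a,b)σ(ab,c) = σ(a,bc)σ(b,c) for all a,b,c ∈ S. -/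
open scoped ComplexConjugate

/-- If `α : S × X → ℂ*` satisfies the multiplicative relation
`α(ab,x)·conj(α(ab,y)) = α(a,φ(b,x))·conj(α(a,φ(b,y)))·α(b,x)·conj(α(b,y))`,
then `σ(a,b) = α(a,φ(b,x))⁻¹ α(b,x)⁻¹ α(ab,x)` is independent of `x`,
unimodular, and satisfies the 2-cocycle identity. -/
theorem sigma_cocycle {S X : Type*} [Monoid S] (φ : S → X → X)
    (hφ : ∀ a b x, φ a (φ b x) = φ (a * b) x) (hφe : ∀ x, φ 1 x = x)
    (α : S → X → ℂ) (hα : ∀ a x, α a x ≠ 0)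
    (hrel : ∀ a b : S, ∀ x y : X,
      α (a * b) x * conj (α (a * b) y) =
        α a (φ b x) * conj (α a (φ b y)) * (α b x * conj (α b y)))
    (x₀ : X) :
    let σ : S → S → ℂ := fun a b => (α a (φ b x₀))⁻¹ * (α b x₀)⁻¹ * α (a * b) x₀
    (∀ a b : S, ∀ x : X,
        (α a (φ b x))⁻¹ * (α b x)⁻¹ * α (a * b) x = σ a b) ∧
    (∀ a b : S, ‖σ a b‖ = 1) ∧
    (∀ a b c : S, σ a b * σ (a * b) c = σ a (b * c) * σ b c) := by
  intro σ
  have hαc : ∀ a x, conj (α a x) ≠ 0 := by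
    intro a x
    simpa using hα a x
  have hind : ∀ a b : S, ∀ x : X,
      (α a (φ b x))⁻¹ * (α b x)⁻¹ * α (a * b) x = σ a b := by
    intro a b x
    have h1 := hrel a b x x₀
    have h2 := hrel a b x₀ x₀
    have key : (α (a * b) x * (α a (φ b x₀) * α b x₀)
        - α (a * b) x₀ * (α a (φ b x) * α b x)) * conj (α (a * b) x₀) = 0 := by
      linear_combination (α a (φ b x₀) * α b x₀) * h1 - (α a (φ b x) * α b x) * h2
    have key2 : α (a * b) x * (α a (φ b x₀) * α b x₀)
        = α (a * b) x₀ * (α a (φ b x) * α b x) := by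
      rcases mul_eq_zero.mp key with h | h
      · exact sub_eq_zero.mp h
      · exact absurd h (hαc _ _)
    simp only [σ]
    field_simp [hα a (φ b x), hα b x, hα a (φ b x₀), hα b x₀]
    linear_combination key2
  have huni : ∀ a b : S, σ a b * conj (σ a b) = 1 := by
    intro a b
    have h2 := hrel a b x₀ x₀
    simp only [σ, map_mul, map_inv₀]
    field_simp [hα a (φ b x₀), hα b x₀, hα (a*b) x₀, hαc a (φ b x₀), hαc b x₀, hαc (a*b) x₀]
    linear_combination h2
  refine ⟨hind, ?_, ?_⟩
  · intro a b
    have h := huni a b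
    rw [Complex.mul_conj] at h
    have hns : Complex.normSq (σ a b) = 1 := by exact_mod_cast h
    rw [Complex.norm_def, hns, Real.sqrt_one]
  · intro a b c
    have e1 : σ a b = (α a (φ (b * c) x₀))⁻¹ * (α b (φ c x₀))⁻¹ * α (a * b) (φ c x₀) := by
      rw [← hind a b (φ c x₀), hφ]
    have e2 : σ (a * b) c = (α (a * b) (φ c x₀))⁻¹ * (α c x₀)⁻¹ * α (a * b * c) x₀ := rfl
    have e3 : σ a (b * c) = (α a (φ (b * c) x₀))⁻¹ * (α (b * c) x₀)⁻¹ * α (a * b * c) x₀ := by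
      simp only [σ, mul_assoc]
    have e4 : σ b c = (α b (φ c x₀))⁻¹ * (α c x₀)⁻¹ * α (b * c) x₀ := rfl
    rw [e1, e2, e3, e4]
    field_simp [hα a (φ (b*c) x₀), hα b (φ c x₀), hα c x₀, hα (a*b) (φ c x₀), hα (b*c) x₀]
end

section
/- Let S be a group acting on a set X via φ with multiplier α satisfying the cocycle relation, and let K : X × X → L(H) be a hermitian kernel on a Kreĭn space H satisfying the invariance K(φ(a,x), φ(a,y)) = conj(α(a,x))·α(a,y)·K(x,y) for all a ∈ S, x,y ∈ X. Then for each a ∈ S, the linear map ψ_a on finitely supported H-valued functions, determined by ψ_a(ξ_x) = α(a,x)⁻¹ ξ_{φ(a,x)}, is isometric with respect to the (indefinite) inner product [f,g]_K = Σ_{x,y} [K(x,y) f(y), g(x)]_H. -/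
open scoped ComplexConjugate
open ContinuousLinearMap

noncomputable section

/-- The (indefinite) sesquilinear form `[f,g]_K = Σ_{x,y} ⟨K(x,y) f(y), g(x)⟩` induced by an
operator-valued kernel `K` on finitely supported `H`-valued functions. -/
def kerForm {X H : Type*} [NormedAddCommGroup H] [InnerProductSpace ℂ H]
    (K : X → X → H →L[ℂ] H) (f g : X →₀ H) : ℂ :=
  f.sum fun y fy => g.sum fun x gx => (inner ℂ (K x y fy) gx : ℂ)

/-- The map `ψ_a` determined on the elementary functions by `ψ_a(ξ_x) = α(a,x)⁻¹ ξ_{φ(a,x)}`. -/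
def psiMap {S X H : Type*} [NormedAddCommGroup H] [InnerProductSpace ℂ H]
    (φ : S → X → X) (α : S → X → ℂ) (a : S) (f : X →₀ H) : X →₀ H :=
  f.sum fun x ξ => Finsupp.single (φ a x) ((α a x)⁻¹ • ξ)

section Aux

variable {X H : Type*} [NormedAddCommGroup H] [InnerProductSpace ℂ H]

lemma kerForm_add_left (K : X → X → H →L[ℂ] H) (f₁ f₂ g : X →₀ H) :
    kerForm K (f₁ + f₂) g = kerForm K f₁ g + kerForm K f₂ g := by
  unfold kerForm
  rw [Finsupp.sum_add_index' (fun _ => by simp) (fun y b₁ b₂ => ?_)]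
  simp [map_add, inner_add_left, Finsupp.sum_add]

lemma kerForm_add_right (K : X → X → H →L[ℂ] H) (f g₁ g₂ : X →₀ H) :
    kerForm K f (g₁ + g₂) = kerForm K f g₁ + kerForm K f g₂ := by
  unfold kerForm
  rw [← Finsupp.sum_add]
  refine Finsupp.sum_congr fun y _ => ?_
  rw [Finsupp.sum_add_index' (fun _ => by simp) (fun x b₁ b₂ => ?_)]
  simp [inner_add_right]

lemma kerForm_single_single (K : X → X → H →L[ℂ] H) (y x : X) (ξ η : H) :
    kerForm K (Finsupp.single y ξ) (Finsupp.single x η) = (inner ℂ (K x y ξ) η : ℂ) := by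
  unfold kerForm
  rw [Finsupp.sum_single_index, Finsupp.sum_single_index]
  · simp
  · rw [Finsupp.sum_single_index] <;> simp

lemma kerForm_sum_left {ι M : Type*} [Zero M] (K : X → X → H →L[ℂ] H)
    (f : ι →₀ M) (F : ι → M → (X →₀ H)) (g : X →₀ H) :
    kerForm K (f.sum F) g = f.sum fun i m => kerForm K (F i m) g :=
  map_finsuppSum (AddMonoidHom.mk' (fun h => kerForm K h g)
    (fun a b => kerForm_add_left K a b g)) f F

lemma kerForm_sum_right {ι M : Type*} [Zero M] (K : X → X → H →L[ℂ] H)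
    (f : X →₀ H) (g : ι →₀ M) (G : ι → M → (X →₀ H)) :
    kerForm K f (g.sum G) = g.sum fun i m => kerForm K f (G i m) :=
  map_finsuppSum (AddMonoidHom.mk' (fun h => kerForm K f h)
    (fun a b => kerForm_add_right K f a b)) g G

end Aux

/-- For a group `S` acting on `X` with multiplier `α`, and a `φ`-invariant hermitian kernel `K`
(satisfying `K(φ(a,x), φ(a,y)) = conj(α(a,x)) α(a,y) K(x,y)`), each map `ψ_a` is isometric
with respect to the inner product `[·,·]_K`. -/
theorem psi_isometric {S X H : Type*} [Group S]
    [NormedAddCommGroup H] [InnerProductSpace ℂ H] [CompleteSpace H]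
    (φ : S → X → X) (hφ : ∀ a b x, φ a (φ b x) = φ (a * b) x) (hφe : ∀ x, φ 1 x = x)
    (α : S → X → ℂ) (hα : ∀ a x, α a x ≠ 0)
    (K : X → X → H →L[ℂ] H) (hherm : ∀ x y, K x y = adjoint (K y x))
    (hinv : ∀ (a : S) (x y : X),
      K (φ a x) (φ a y) = (conj (α a x) * α a y) • K x y) :
    ∀ (a : S) (f g : X →₀ H),
      kerForm K (psiMap φ α a f) (psiMap φ α a g) = kerForm K f g := by
  intro a f g
  unfold psiMap
  rw [kerForm_sum_left]
  simp only [kerForm_sum_right]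
  rw [show kerForm K f g = f.sum fun y ξ => g.sum fun x η => (inner ℂ (K x y ξ) η : ℂ) from rfl]
  refine Finsupp.sum_congr fun y _ => Finsupp.sum_congr fun x _ => ?_
  rw [kerForm_single_single, hinv]
  simp only [ContinuousLinearMap.smul_apply, map_smul, inner_smul_left, inner_smul_right,
    smul_smul, map_mul, RingHom.id_apply, Complex.conj_conj, map_inv₀]
  have hx := hα a x
  have hy := hα a y
  field_simp
  exact mul_div_cancel_left₀ _ (by simpa using hy)

end
end
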